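/- arXiv:0803.3951 — 2 statements merged into one kernel-verified Lean document; each statement's English description precedes it below -/
import Mathlib

section
/- Let f: V ⇢ V be a rational map, ι: ℙ¹ ⇢ V a rational embedding, and φ a Möbius transformation with f ∘ ι = ι ∘ φ. If H = F/G with F, G regular along ι(ℙ¹) is a rational first integral of f (H ∘ f = H), then the generic junior part H°_ι = F°_ι / G°_ι is a first integral of the variational equation φY = Df(ι)·Y along ι. -/
open Filter Topology Asymptotics

/-- Key one-variable lemma: if `F` is analytic at `q 0` and all its diagonal
derivatives of order `< k` vanish at `q 0`, and `q` has derivative `u` at `0`,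
then `k ! * (F (q t) / t ^ k)` tends to the `k`-th diagonal derivative of `F`
at `q 0` in direction `u`. -/
private lemma key_tendsto {E : Type*} [NormedAddCommGroup E] [NormedSpace ℂ E]
    (F : E → ℂ) (q : ℂ → E) (u : E) (k : ℕ)
    (hFa : AnalyticAt ℂ F (q 0)) (hu : HasDerivAt q u 0)
    (hvan : ∀ m < k, ∀ v : E, iteratedFDeriv ℂ m F (q 0) (fun _ => v) = 0) :
    Tendsto (fun t : ℂ => (Nat.factorial k : ℂ) * (F (q t) / t ^ k)) (𝓝[≠] 0)
      (𝓝 (iteratedFDeriv ℂ k F (q 0) (fun _ => u))) := by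
  obtain ⟨p, hp⟩ := hFa
  obtain ⟨r, hpb⟩ := hp
  have hcoef : ∀ (m : ℕ) (v : E),
      (Nat.factorial m : ℂ) * p m (fun _ => v) = iteratedFDeriv ℂ m F (q 0) (fun _ => v) := by
    intro m v
    have := hpb.factorial_smul v m
    rwa [nsmul_eq_mul] at this
  have hpzero : ∀ m < k, ∀ v : E, p m (fun _ => v) = 0 := by
    intro m hm v
    have h1 := hcoef m v
    rw [hvan m hm v] at h1
    exact (mul_eq_zero.mp h1).resolve_left
      (Nat.cast_ne_zero.mpr (Nat.factorial_ne_zero m))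
  set e : ℂ → E := fun t => q t - q 0 with he
  have heO : e =O[𝓝 0] (fun t : ℂ => t) := by
    simpa using hu.hasFDerivAt.isBigO_sub
  have het : Tendsto e (𝓝 0) (𝓝 0) := by
    have : ContinuousAt e 0 := hu.continuousAt.sub continuousAt_const
    simpa [he, sub_self] using this.tendsto
  have hrem : (fun t : ℂ => F (q 0 + e t) - p.partialSum (k + 1) (e t))
      =O[𝓝 0] fun t => ‖e t‖ ^ (k + 1) :=
    ((HasFPowerSeriesOnBall.hasFPowerSeriesAt hpb).isBigO_sub_partialSum_pow (k + 1)).comp_tendsto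
      het
  have hre2 : (fun t : ℂ => F (q t) - p.partialSum (k + 1) (e t))
      =O[𝓝 0] fun t => ‖e t‖ ^ (k + 1) := by
    simpa [he] using hrem
  have h3 : (fun t : ℂ => ‖e t‖ ^ (k + 1)) =O[𝓝 0] (fun t : ℂ => ‖t‖ ^ (k + 1)) :=
    (heO.norm_left.norm_right).pow (k + 1)
  have h4 : (fun t : ℂ => ‖t‖ ^ (k + 1)) =o[𝓝 0] (fun t : ℂ => t ^ k) := by
    rw [isLittleO_iff]
    intro c hc
    filter_upwards [Metric.ball_mem_nhds (0 : ℂ) hc] with t ht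
    rw [Metric.mem_ball, dist_zero_right] at ht
    have h1 : ‖(‖t‖ ^ (k + 1) : ℝ)‖ = ‖t‖ * ‖t‖ ^ k := by
      rw [Real.norm_of_nonneg (by positivity), pow_succ']
    rw [h1, norm_pow]
    exact mul_le_mul_of_nonneg_right ht.le (by positivity)
  have h5 : (fun t : ℂ => F (q t) - p.partialSum (k + 1) (e t)) =o[𝓝 0]
      (fun t : ℂ => t ^ k) := hre2.trans_isLittleO (h3.trans_isLittleO h4)
  have h6 : Tendsto (fun t : ℂ => (F (q t) - p.partialSum (k + 1) (e t)) / t ^ k)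
      (𝓝[≠] 0) (𝓝 0) :=
    (h5.mono nhdsWithin_le_nhds).tendsto_div_nhds_zero
  have hg : Tendsto (fun t : ℂ => t⁻¹ • e t) (𝓝[≠] 0) (𝓝 u) := by
    have := hasDerivAt_iff_tendsto_slope.mp hu
    simpa [slope_fun_def, he] using this
  have h7 : Tendsto (fun t : ℂ => p k (fun _ => t⁻¹ • e t)) (𝓝[≠] 0)
      (𝓝 (p k (fun _ => u))) := by
    have hc : Continuous fun v : E => p k (fun _ : Fin k => v) :=
      (p k).cont.comp (continuous_pi fun _ => continuous_id)
    exact (hc.tendsto u).comp hg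
  have h8 := h6.add h7
  rw [zero_add] at h8
  have key : Tendsto (fun t : ℂ => F (q t) / t ^ k) (𝓝[≠] 0) (𝓝 (p k (fun _ => u))) := by
    refine h8.congr' ?_
    filter_upwards [self_mem_nhdsWithin] with t (ht : t ≠ 0)
    have hsum : p.partialSum (k + 1) (e t) = p k (fun _ => e t) := by
      rw [FormalMultilinearSeries.partialSum, Finset.sum_range_succ,
        Finset.sum_eq_zero fun m hm => hpzero m (Finset.mem_range.mp hm) (e t), zero_add]
    have hek : p k (fun _ => e t) = t ^ k * p k (fun _ => t⁻¹ • e t) := by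
      have hfun : (fun _ : Fin k => e t) = fun _ : Fin k => t • (t⁻¹ • e t) := by
        funext i; rw [smul_inv_smul₀ ht]
      rw [hfun, (p k).map_smul_univ, Finset.prod_const, Finset.card_univ,
        Fintype.card_fin, smul_eq_mul]
    rw [hsum, hek, sub_div, mul_div_cancel_left₀ _ (pow_ne_zero k ht), sub_add_cancel]
  have := key.const_mul (Nat.factorial k : ℂ)
  rwa [hcoef k u] at this

/-- Let `f : V ⇢ V` (here `V = ℂ^N`), `ι : ℙ¹ ⇢ V` a curve (parametrized by
`z ∈ ℂ`) that is `φ`-adapted: `f ∘ ι = ι ∘ φ`. Let `H = F/G` be a first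
integral of `f` with `F, G` regular along the curve, i.e.
`(F ∘ f)·G = (G ∘ f)·F`. Let `kF` (resp. `kG`) be the generic valuation of `F`
(resp. `G`) along `ι`: the least `m` such that the `m`-th derivative of `F`
along the curve is not identically zero; the generic junior part of `F` is the
fiberwise function `(z, w) ↦ D^{kF}F(ι z)(w,…,w)`. Then the junior part
`H° = F°/G°` is a first integral of the variational equation
`Y(φz) = Df(ι z)·Y(z)`:
`F°(φz, Df(ι z)w) · G°(z,w) = G°(φz, Df(ι z)w) · F°(z,w)`. -/
theorem stmt_7 {N : ℕ} (f : (Fin N → ℂ) → Fin N → ℂ)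
    (F G : (Fin N → ℂ) → ℂ) (ι : ℂ → Fin N → ℂ) (φ : ℂ → ℂ)
    (hf : ContDiff ℂ ⊤ f) (hF : ContDiff ℂ ⊤ F) (hG : ContDiff ℂ ⊤ G)
    (hι : ContDiff ℂ ⊤ ι)
    (hadapted : ∀ z, f (ι z) = ι (φ z))
    (hFI : ∀ p, F (f p) * G p = G (f p) * F p)
    (kF kG : ℕ)
    (hkF : (∀ m < kF, ∀ z w, iteratedFDeriv ℂ m F (ι z) (fun _ => w) = 0) ∧
      ¬ (∀ z w, iteratedFDeriv ℂ kF F (ι z) (fun _ => w) = 0))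
    (hkG : (∀ m < kG, ∀ z w, iteratedFDeriv ℂ m G (ι z) (fun _ => w) = 0) ∧
      ¬ (∀ z w, iteratedFDeriv ℂ kG G (ι z) (fun _ => w) = 0)) :
    ∀ (z : ℂ) (w : Fin N → ℂ),
      iteratedFDeriv ℂ kF F (ι (φ z)) (fun _ => fderiv ℂ f (ι z) w) *
        iteratedFDeriv ℂ kG G (ι z) (fun _ => w) =
      iteratedFDeriv ℂ kG G (ι (φ z)) (fun _ => fderiv ℂ f (ι z) w) *
        iteratedFDeriv ℂ kF F (ι z) (fun _ => w) := by
  intro z w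
  set x : Fin N → ℂ := ι z with hx
  set u : Fin N → ℂ := fderiv ℂ f x w with hu
  -- the line through x in direction w
  set P : ℂ → (Fin N → ℂ) := fun t => x + t • w with hP
  have hP0 : P 0 = x := by simp [hP]
  have hPd : HasDerivAt P w 0 := by
    have h1 : HasDerivAt (fun t : ℂ => t • w) ((1 : ℂ) • w) 0 :=
      (hasDerivAt_id (0 : ℂ)).smul_const w
    rw [one_smul] at h1
    exact h1.const_add x
  -- the curve f ∘ P
  set Q : ℂ → (Fin N → ℂ) := fun t => f (P t) with hQ
  have hQ0 : Q 0 = ι (φ z) := by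
    show f (P 0) = ι (φ z)
    rw [hP0]
    exact hadapted z
  have hQd : HasDerivAt Q u 0 := by
    have hfd : HasFDerivAt f (fderiv ℂ f x) (P 0) := by
      rw [hP0]; exact (hf.differentiable (by simp) x).hasFDerivAt
    exact hfd.comp_hasDerivAt 0 hPd
  have hFaQ : AnalyticAt ℂ F (Q 0) := hF.contDiffAt.analyticAt
  have hGaQ : AnalyticAt ℂ G (Q 0) := hG.contDiffAt.analyticAt
  have hFaP : AnalyticAt ℂ F (P 0) := hF.contDiffAt.analyticAt
  have hGaP : AnalyticAt ℂ G (P 0) := hG.contDiffAt.analyticAt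
  have hvFQ : ∀ m < kF, ∀ v : Fin N → ℂ, iteratedFDeriv ℂ m F (Q 0) (fun _ => v) = 0 := by
    intro m hm v; rw [hQ0]; exact hkF.1 m hm (φ z) v
  have hvGQ : ∀ m < kG, ∀ v : Fin N → ℂ, iteratedFDeriv ℂ m G (Q 0) (fun _ => v) = 0 := by
    intro m hm v; rw [hQ0]; exact hkG.1 m hm (φ z) v
  have hvFP : ∀ m < kF, ∀ v : Fin N → ℂ, iteratedFDeriv ℂ m F (P 0) (fun _ => v) = 0 := by
    intro m hm v; rw [hP0, hx]; exact hkF.1 m hm z v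
  have hvGP : ∀ m < kG, ∀ v : Fin N → ℂ, iteratedFDeriv ℂ m G (P 0) (fun _ => v) = 0 := by
    intro m hm v; rw [hP0, hx]; exact hkG.1 m hm z v
  have LA := key_tendsto F Q u kF hFaQ hQd hvFQ
  have Lb := key_tendsto G P w kG hGaP hPd hvGP
  have LC := key_tendsto G Q u kG hGaQ hQd hvGQ
  have Ld := key_tendsto F P w kF hFaP hPd hvFP
  have M1 := LA.mul Lb
  have M2 := LC.mul Ld
  have heq : (fun t : ℂ => (Nat.factorial kG : ℂ) * (G (Q t) / t ^ kG) *
        ((Nat.factorial kF : ℂ) * (F (P t) / t ^ kF)))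
      =ᶠ[𝓝[≠] (0 : ℂ)] (fun t : ℂ => (Nat.factorial kF : ℂ) * (F (Q t) / t ^ kF) *
        ((Nat.factorial kG : ℂ) * (G (P t) / t ^ kG))) := by
    filter_upwards [self_mem_nhdsWithin] with t (ht : t ≠ 0)
    have h : F (Q t) * G (P t) = G (Q t) * F (P t) := hFI (P t)
    rw [mul_mul_mul_comm, div_mul_div_comm, mul_mul_mul_comm, div_mul_div_comm, ← h,
      mul_comm ((Nat.factorial kG : ℂ)) ((Nat.factorial kF : ℂ)),
      mul_comm (t ^ kG) (t ^ kF)]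
  have huniq := tendsto_nhds_unique (M2.congr' heq) M1
  rw [hQ0, hP0] at huniq
  exact huniq.symm
end

section
/- Consider the rational map f(x, y) = (qx/(1 − y/(x−1)), q̄·y·(1 − y/(x−1))) on ℂ². If q·q̄ is a primitive m-th root of unity, then F(x, y) = (xy)^m is a non-constant rational first integral of f, i.e., F ∘ f = F. -/
/-- For the rational map
`f(x, y) = (qx/(1 − y/(x−1)), q̄·y·(1 − y/(x−1)))` on `ℂ²`, if `q·q̄` is an
`m`-th root of unity (`m ≥ 1`), then `F(x, y) = (xy)^m` is a non-constant
rational first integral of `f` : `F ∘ f = F` wherever `f` is defined. -/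
theorem stmt_9 (q qb : ℂ) (hq : q ≠ 0) (hqb : qb ≠ 0) (m : ℕ) (hm : 1 ≤ m)
    (hroot : (q * qb) ^ m = 1) :
    (∀ x y : ℂ, x ≠ 1 → y ≠ x - 1 →
      ((q * x / (1 - y / (x - 1))) * (qb * y * (1 - y / (x - 1)))) ^ m
        = (x * y) ^ m) ∧
    -- `F(x,y) = (xy)^m` is non-constant
    (∃ x y x' y' : ℂ, (x * y) ^ m ≠ (x' * y') ^ m) := by
  constructor
  · intro x y hx hy
    have hx1 : x - 1 ≠ 0 := sub_ne_zero.mpr hx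
    have hd : 1 - y / (x - 1) ≠ 0 := by
      rw [sub_ne_zero]
      intro h
      exact hy ((div_eq_one_iff_eq hx1).mp h.symm)
    have key : (q * x / (1 - y / (x - 1))) * (qb * y * (1 - y / (x - 1)))
        = (q * qb) * (x * y) := by
      have h2 : (q * x / (1 - y / (x - 1))) * (qb * y * (1 - y / (x - 1)))
          = q * x * (qb * y) * ((1 - y / (x - 1))⁻¹ * (1 - y / (x - 1))) := by
        ring
      rw [h2, inv_mul_cancel₀ hd, mul_one]; ring
    rw [key, mul_pow, hroot, one_mul]
  · refine ⟨1, 1, 0, 0, ?_⟩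
    simp [zero_pow (by omega : m ≠ 0)]
end
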